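/- Let H be a nonzero complex Hilbert space and let B, C be bounded linear operators on H. Then for every α with 0 ≤ α ≤ 1, w_e(B, C)² ≤ w(√α·B + √(1 − α)·C)² + w(√(1 − α)·B − √α·C)². -/

import Mathlib

open scoped InnerProductSpace
open ContinuousLinearMap

variable {H : Type*} [NormedAddCommGroup H] [InnerProductSpace ℂ H]
  [CompleteSpace H] [Nontrivial H]

/-- The numerical radius of a bounded linear operator. -/
noncomputable def numRad (A : H →L[ℂ] H) : ℝ :=
  ⨆ x : {x : H // ‖x‖ = 1}, ‖⟪A x.1, x.1⟫_ℂ‖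

/-- The Crawford number of a bounded linear operator. -/
noncomputable def crawford (A : H →L[ℂ] H) : ℝ :=
  ⨅ x : {x : H // ‖x‖ = 1}, ‖⟪A x.1, x.1⟫_ℂ‖

/-- The Euclidean operator radius of a pair of bounded linear operators. -/
noncomputable def euclRad (B C : H →L[ℂ] H) : ℝ :=
  ⨆ x : {x : H // ‖x‖ = 1}, Real.sqrt (‖⟪B x.1, x.1⟫_ℂ‖ ^ 2 + ‖⟪C x.1, x.1⟫_ℂ‖ ^ 2)

/-- The absolute value `|A| = (A*A)^(1/2)` of a bounded linear operator. -/
noncomputable def opAbs (A : H →L[ℂ] H) : H →L[ℂ] H := CFC.sqrt (adjoint A * A)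

/-- The real part `Re(A) = (A + A*)/2` of a bounded linear operator. -/
noncomputable def reOp (A : H →L[ℂ] H) : H →L[ℂ] H := (2 : ℂ)⁻¹ • (A + adjoint A)

/-- The imaginary part `Im(A) = (A - A*)/(2i)` of a bounded linear operator. -/
noncomputable def imOp (A : H →L[ℂ] H) : H →L[ℂ] H := (2 * Complex.I)⁻¹ • (A - adjoint A)

lemma bddAbove_numRad (A : H →L[ℂ] H) :
    BddAbove (Set.range fun x : {x : H // ‖x‖ = 1} => ‖⟪A x.1, x.1⟫_ℂ‖) := by
  refine ⟨‖A‖, ?_⟩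
  rintro _ ⟨x, rfl⟩
  calc ‖⟪A x.1, x.1⟫_ℂ‖ ≤ ‖A x.1‖ * ‖x.1‖ := norm_inner_le_norm _ _
    _ ≤ ‖A‖ * ‖x.1‖ * ‖x.1‖ := by gcongr; exact A.le_opNorm _
    _ = ‖A‖ := by rw [x.2]; ring

lemma le_numRad (A : H →L[ℂ] H) (x : {x : H // ‖x‖ = 1}) :
    ‖⟪A x.1, x.1⟫_ℂ‖ ≤ numRad A :=
  le_ciSup (bddAbove_numRad A) x

lemma numRad_nonneg (A : H →L[ℂ] H) : 0 ≤ numRad A := by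
  obtain ⟨y, hy⟩ := exists_ne (0 : H)
  have hx : ‖(‖y‖⁻¹ • y)‖ = 1 := by
    rw [norm_smul, norm_inv, norm_norm, inv_mul_cancel₀ (norm_ne_zero_iff.mpr hy)]
  exact le_trans (norm_nonneg _) (le_numRad A ⟨_, hx⟩)

theorem stmt14 (B C : H →L[ℂ] H) (α : ℝ) (h0 : 0 ≤ α) (h1 : α ≤ 1) :
    (euclRad B C) ^ 2 ≤
      (numRad (Real.sqrt α • B + Real.sqrt (1 - α) • C)) ^ 2
        + (numRad (Real.sqrt (1 - α) • B - Real.sqrt α • C)) ^ 2 := by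
  set s := Real.sqrt α with hs
  set t := Real.sqrt (1 - α) with ht
  have hs2 : s ^ 2 = α := Real.sq_sqrt h0
  have ht2 : t ^ 2 = 1 - α := Real.sq_sqrt (by linarith)
  set n1 := numRad (s • B + t • C) with hn1
  set n2 := numRad (t • B - s • C) with hn2
  have key : euclRad B C ≤ Real.sqrt (n1 ^ 2 + n2 ^ 2) := by
    obtain ⟨y, hy⟩ := exists_ne (0 : H)
    have hx : ‖(‖y‖⁻¹ • y)‖ = 1 := by
      rw [norm_smul, norm_inv, norm_norm, inv_mul_cancel₀ (norm_ne_zero_iff.mpr hy)]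
    have : Nonempty {x : H // ‖x‖ = 1} := ⟨⟨_, hx⟩⟩
    refine ciSup_le fun x => ?_
    set b := ⟪B x.1, x.1⟫_ℂ with hb
    set c := ⟪C x.1, x.1⟫_ℂ with hc
    have hcoe : ∀ (r : ℝ) (y : H), r • y = (r : ℂ) • y := fun r y => by
      rw [Complex.coe_smul]
    have hu : ⟪(s • B + t • C) x.1, x.1⟫_ℂ = (s : ℂ) * b + (t : ℂ) * c := by
      rw [ContinuousLinearMap.add_apply, ContinuousLinearMap.smul_apply,
        ContinuousLinearMap.smul_apply, inner_add_left, hcoe, hcoe,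
        inner_smul_left, inner_smul_left, Complex.conj_ofReal, Complex.conj_ofReal]
    have hv : ⟪(t • B - s • C) x.1, x.1⟫_ℂ = (t : ℂ) * b - (s : ℂ) * c := by
      rw [ContinuousLinearMap.sub_apply, ContinuousLinearMap.smul_apply,
        ContinuousLinearMap.smul_apply, inner_sub_left, hcoe, hcoe,
        inner_smul_left, inner_smul_left, Complex.conj_ofReal, Complex.conj_ofReal]
    have hid : ‖b‖ ^ 2 + ‖c‖ ^ 2
        = ‖(s : ℂ) * b + (t : ℂ) * c‖ ^ 2 + ‖(t : ℂ) * b - (s : ℂ) * c‖ ^ 2 := by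
      have hst : s ^ 2 + t ^ 2 = 1 := by rw [hs2, ht2]; ring
      simp only [Complex.sq_norm, Complex.normSq_apply,
        Complex.add_re, Complex.add_im, Complex.sub_re, Complex.sub_im,
        Complex.mul_re, Complex.mul_im, Complex.ofReal_re, Complex.ofReal_im]
      nlinarith [hst, sq_nonneg b.re, sq_nonneg b.im]
    have h1' : ‖(s : ℂ) * b + (t : ℂ) * c‖ ≤ n1 := by
      rw [← hu]; exact le_numRad _ x
    have h2' : ‖(t : ℂ) * b - (s : ℂ) * c‖ ≤ n2 := by
      rw [← hv]; exact le_numRad _ x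
    rw [hid]
    apply Real.sqrt_le_sqrt
    have := norm_nonneg ((s : ℂ) * b + (t : ℂ) * c)
    have := norm_nonneg ((t : ℂ) * b - (s : ℂ) * c)
    nlinarith
  have hnn : 0 ≤ euclRad B C := by
    obtain ⟨y, hy⟩ := exists_ne (0 : H)
    have hx : ‖(‖y‖⁻¹ • y)‖ = 1 := by
      rw [norm_smul, norm_inv, norm_norm, inv_mul_cancel₀ (norm_ne_zero_iff.mpr hy)]
    refine le_trans (Real.sqrt_nonneg _)
      (le_ciSup (f := fun x : {x : H // ‖x‖ = 1} =>
        Real.sqrt (‖⟪B x.1, x.1⟫_ℂ‖ ^ 2 + ‖⟪C x.1, x.1⟫_ℂ‖ ^ 2)) ?_ ⟨_, hx⟩)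
    refine ⟨Real.sqrt (‖B‖ ^ 2 + ‖C‖ ^ 2), ?_⟩
    rintro _ ⟨x, rfl⟩
    apply Real.sqrt_le_sqrt
    have hB : ‖⟪B x.1, x.1⟫_ℂ‖ ≤ ‖B‖ := by
      calc ‖⟪B x.1, x.1⟫_ℂ‖ ≤ ‖B x.1‖ * ‖x.1‖ := norm_inner_le_norm _ _
        _ ≤ ‖B‖ * ‖x.1‖ * ‖x.1‖ := by gcongr; exact B.le_opNorm _
        _ = ‖B‖ := by rw [x.2]; ring
    have hC : ‖⟪C x.1, x.1⟫_ℂ‖ ≤ ‖C‖ := by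
      calc ‖⟪C x.1, x.1⟫_ℂ‖ ≤ ‖C x.1‖ * ‖x.1‖ := norm_inner_le_norm _ _
        _ ≤ ‖C‖ * ‖x.1‖ * ‖x.1‖ := by gcongr; exact C.le_opNorm _
        _ = ‖C‖ := by rw [x.2]; ring
    have := norm_nonneg (⟪B x.1, x.1⟫_ℂ)
    have := norm_nonneg (⟪C x.1, x.1⟫_ℂ)
    nlinarith
  calc euclRad B C ^ 2 ≤ Real.sqrt (n1 ^ 2 + n2 ^ 2) ^ 2 := by
        apply pow_le_pow_left₀ hnn key 2
    _ = n1 ^ 2 + n2 ^ 2 := Real.sq_sqrt (by positivity)
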